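/- arXiv:0803.0630 — 2 statements merged into one kernel-verified Lean document; each statement's English description precedes it below -/
import Mathlib

section
/- Let m be a binary operation on pairs (κ, p) with κ a positive rational credence and p a real probability, which is commutative and associative, and which satisfies: for every n ≥ 1, every positive rational κ, and all reals p₁, …, pₙ, the n-fold merger of [κ; p₁], [κ; p₂], …, [κ; pₙ] equals [nκ; (1/n)(p₁ + ⋯ + pₙ)]. Then for all positive rationals κ₁, …, κₙ and reals p₁, …, pₙ, the merger of [κ₁; p₁], …, [κₙ; pₙ] equals [κ₁ + ⋯ + κₙ; (κ₁p₁ + ⋯ + κₙpₙ)/(κ₁ + ⋯ + κₙ)]. -/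
/-- The merger of a first evidence `e` with a further list of evidences `l`,
obtained by successively applying the binary merger operation `m`. -/
def mergeList (m : ℚ × ℝ → ℚ × ℝ → ℚ × ℝ) (e : ℚ × ℝ) (l : List (ℚ × ℝ)) : ℚ × ℝ :=
  l.foldl m e

namespace StraightMergerAux

abbrev E := ℚ × ℝ

/-- `m` extended with a unit element `none`. -/
def M (m : E → E → E) : Option E → Option E → Option E
  | none, y => y
  | some a, none => some a
  | some a, some b => some (m a b)

/-- Fold of a list of evidences in the extended monoid. -/
def G (m : E → E → E) (l : List E) : Option E :=
  l.foldr (fun e acc => M m (some e) acc) none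

@[simp] lemma G_nil (m : E → E → E) : G m [] = none := rfl

@[simp] lemma G_cons (m : E → E → E) (e : E) (l : List E) :
    G m (e :: l) = M m (some e) (G m l) := rfl

lemma M_none_left (m : E → E → E) (x : Option E) : M m none x = x := by cases x <;> rfl

lemma M_assoc (m : E → E → E) (hassoc : ∀ e₁ e₂ e₃, m (m e₁ e₂) e₃ = m e₁ (m e₂ e₃))
    (x y z : Option E) : M m (M m x y) z = M m x (M m y z) := by
  cases x <;> cases y <;> cases z <;> simp [M, hassoc]

lemma foldl_assoc (m : E → E → E) (hassoc : ∀ e₁ e₂ e₃, m (m e₁ e₂) e₃ = m e₁ (m e₂ e₃)) :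
    ∀ (l : List E) (e h : E), List.foldl m (m e h) l = m e (List.foldl m h l)
  | [], e, h => rfl
  | x :: xs, e, h => by
    simp only [List.foldl_cons, hassoc]
    exact foldl_assoc m hassoc xs e (m h x)

lemma G_cons_eq (m : E → E → E) (hassoc : ∀ e₁ e₂ e₃, m (m e₁ e₂) e₃ = m e₁ (m e₂ e₃)) :
    ∀ (l : List E) (e : E), G m (e :: l) = some (List.foldl m e l)
  | [], e => rfl
  | h :: t, e => by
    rw [G_cons, G_cons_eq m hassoc t h]
    show some (m e (List.foldl m h t)) = _
    rw [← foldl_assoc m hassoc, List.foldl_cons]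

lemma G_append (m : E → E → E) (hassoc : ∀ e₁ e₂ e₃, m (m e₁ e₂) e₃ = m e₁ (m e₂ e₃)) :
    ∀ l₁ l₂ : List E, G m (l₁ ++ l₂) = M m (G m l₁) (G m l₂)
  | [], l₂ => (M_none_left m _).symm
  | e :: t, l₂ => by
    rw [List.cons_append, G_cons, G_append m hassoc t l₂, G_cons,
      M_assoc m hassoc]

lemma G_flatten (m : E → E → E) (hassoc : ∀ e₁ e₂ e₃, m (m e₁ e₂) e₃ = m e₁ (m e₂ e₃))
    {ls : List (List E)} {es : List E}
    (h : List.Forall₂ (fun l e => G m l = some e) ls es) :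
    G m ls.flatten = G m es := by
  induction h with
  | nil => rfl
  | @cons l e ls' es' h1 _ ih =>
    rw [List.flatten_cons, G_append m hassoc, h1, ih, G_cons]

lemma forall₂_ofFn {α β : Type*} (R : α → β → Prop) :
    ∀ (k : ℕ) (f : Fin k → α) (g : Fin k → β),
      (∀ i, R (f i) (g i)) → List.Forall₂ R (List.ofFn f) (List.ofFn g)
  | 0, f, g, _ => by simp
  | k + 1, f, g, h => by
    rw [List.ofFn_succ, List.ofFn_succ]
    exact List.Forall₂.cons (h 0) (forall₂_ofFn R k _ _ fun i => h i.succ)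

end StraightMergerAux

open StraightMergerAux in
/-- If a commutative and associative merger operation on evidences `[κ; p]`
(credence `κ` a positive rational, probability `p` a real) merges any `n ≥ 1`
equi-credible evidences `[κ; p₁], …, [κ; pₙ]` into `[nκ; (1/n)∑pᵢ]`, then it
merges arbitrary evidences `[κ₁; p₁], …, [κₙ; pₙ]` with positive rational
credences into `[∑κᵢ; (∑κᵢpᵢ)/(∑κᵢ)]`. -/
theorem straight_merger_rule_from_equicredible_postulate
    (m : ℚ × ℝ → ℚ × ℝ → ℚ × ℝ)
    (hcomm : ∀ e₁ e₂, m e₁ e₂ = m e₂ e₁)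
    (hassoc : ∀ e₁ e₂ e₃, m (m e₁ e₂) e₃ = m e₁ (m e₂ e₃))
    (hequi : ∀ (n : ℕ) (κ : ℚ), 0 < κ → ∀ p : Fin (n + 1) → ℝ,
      mergeList m (κ, p 0) (List.ofFn fun i : Fin n => (κ, p i.succ)) =
        (((n : ℚ) + 1) * κ, (∑ i, p i) / ((n : ℝ) + 1))) :
    ∀ (n : ℕ) (κ : Fin (n + 1) → ℚ) (p : Fin (n + 1) → ℝ), (∀ i, 0 < κ i) →
      mergeList m (κ 0, p 0) (List.ofFn fun i : Fin n => (κ i.succ, p i.succ)) =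
        (∑ i, κ i, (∑ i, (κ i : ℝ) * p i) / ((∑ i, κ i : ℚ) : ℝ)) := by
  intro n κ p hκ
  -- the equi-credible postulate in terms of `G`
  have H : ∀ (k : ℕ) (c : ℚ), 0 < c → ∀ q : Fin (k + 1) → ℝ,
      G m (List.ofFn fun i : Fin (k + 1) => (c, q i)) =
        some (((k : ℚ) + 1) * c, (∑ i, q i) / ((k : ℝ) + 1)) := by
    intro k c hc q
    rw [List.ofFn_succ, G_cons_eq m hassoc]
    exact congrArg some (hequi k c hc q)
  -- common denominator
  set d : ℕ := ∏ i, (κ i).den with hd_def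
  have hd : 0 < d := Finset.prod_pos fun i _ => (κ i).pos
  have hdq : ((d : ℚ)) ≠ 0 := by exact_mod_cast hd.ne'
  set u : ℚ := 1 / (d : ℚ) with hu_def
  have hu : 0 < u := by positivity
  have hden : ∀ i, (κ i).den ∣ d := fun i => Finset.dvd_prod_of_mem _ (Finset.mem_univ i)
  -- natural multiplicities
  obtain ⟨a, haq, ha1⟩ : ∃ a : Fin (n + 1) → ℕ,
      (∀ i, (a i : ℚ) = κ i * d) ∧ ∀ i, 1 ≤ a i := by
    refine ⟨fun i => (κ i).num.toNat * (d / (κ i).den), fun i => ?_, fun i => ?_⟩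
    · have hnum : (0 : ℤ) ≤ (κ i).num := le_of_lt (Rat.num_pos.2 (hκ i))
      have h2 : ((κ i).den : ℚ) * ((d / (κ i).den : ℕ) : ℚ) = (d : ℚ) := by
        exact_mod_cast Nat.mul_div_cancel' (hden i)
      have hden0 : ((κ i).den : ℚ) ≠ 0 := Nat.cast_ne_zero.2 (κ i).den_nz
      have htn : (((κ i).num.toNat : ℕ) : ℚ) = ((κ i).num : ℚ) := by
        exact_mod_cast Int.toNat_of_nonneg hnum
      have h3 : ((((κ i).num.toNat * (d / (κ i).den) : ℕ)) : ℚ) =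
          ((κ i).num : ℚ) * ((d / (κ i).den : ℕ) : ℚ) := by
        rw [Nat.cast_mul, htn]
      rw [h3, ← h2, ← mul_assoc, Rat.mul_den_eq_num]
    · have h1 : 1 ≤ (κ i).num.toNat := by
        have : 0 < (κ i).num := Rat.num_pos.2 (hκ i)
        omega
      have h2 : 1 ≤ d / (κ i).den :=
        (Nat.one_le_div_iff (κ i).pos).2 (Nat.le_of_dvd hd (hden i))
      calc 1 = 1 * 1 := by ring
        _ ≤ _ := Nat.mul_le_mul h1 h2
  -- each evidence is the merger of `a i` equi-credible unit evidences
  have hblock : ∀ i, G m (List.replicate (a i) (u, p i)) = some (κ i, p i) := by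
    intro i
    obtain ⟨b, hb⟩ : ∃ b, a i = b + 1 := ⟨a i - 1, (Nat.sub_add_cancel (ha1 i)).symm⟩
    have h := H b u hu fun _ => p i
    rw [List.ofFn_const] at h
    rw [hb, h]
    congr 1
    have hb0 : ((b : ℝ) + 1) ≠ 0 := by positivity
    have hcred : ((b : ℚ) + 1) * u = κ i := by
      have : ((b : ℚ) + 1) = (a i : ℚ) := by rw [hb]; push_cast; ring
      rw [this, haq i, hu_def]
      field_simp
    have hsum : (∑ _j : Fin (b + 1), p i) = ((b : ℝ) + 1) * p i := by
      rw [Finset.sum_const, Finset.card_univ, Fintype.card_fin, nsmul_eq_mul]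
      push_cast; ring
    rw [hcred, hsum]
    congr 1
    exact mul_div_cancel_left₀ (p i) hb0
  -- replace each evidence by its block of unit evidences
  have hT : G m ((List.ofFn fun i : Fin (n + 1) => List.replicate (a i) (u, p i)).flatten) =
      G m (List.ofFn fun i : Fin (n + 1) => (κ i, p i)) :=
    G_flatten m hassoc (forall₂_ofFn _ _ _ _ fun i => hblock i)
  -- the flattened list of probabilities
  set ps : List ℝ := (List.ofFn fun i : Fin (n + 1) => List.replicate (a i) (p i)).flatten
    with hps_def
  have hmap : (List.ofFn fun i : Fin (n + 1) => List.replicate (a i) (u, p i)).flatten =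
      ps.map (Prod.mk u) := by
    rw [hps_def, List.map_flatten, List.map_ofFn]
    simp [Function.comp_def]
  have hlen : ps.length = ∑ i, a i := by
    rw [hps_def, List.length_flatten, List.map_ofFn]
    simp [Function.comp_def, List.sum_ofFn]
    rw [Fin.sum_univ_succ]
  have hpsum : ps.sum = ∑ i, (a i : ℝ) * p i := by
    rw [hps_def, List.sum_flatten, List.map_ofFn]
    simp [Function.comp_def, List.sum_ofFn, nsmul_eq_mul]
    rw [Fin.sum_univ_succ]
  have hne : ps ≠ [] := by
    apply List.length_pos_iff.1
    rw [hlen]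
    calc 0 < 1 := one_pos
      _ ≤ a 0 := ha1 0
      _ ≤ ∑ i, a i := Finset.single_le_sum (fun _ _ => Nat.zero_le _) (Finset.mem_univ 0)
  obtain ⟨x, xs, hxs⟩ := List.exists_cons_of_ne_nil hne
  -- merge the whole flattened list using the postulate
  have hmain : G m (ps.map (Prod.mk u)) =
      some ((↑(xs.length + 1) : ℚ) * u, ps.sum / (↑(xs.length + 1) : ℝ)) := by
    have h := H xs.length u hu fun i : Fin (xs.length + 1) => (x :: xs).get i
    have hl : (List.ofFn fun i : Fin (xs.length + 1) => (u, (x :: xs).get i)) =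
        (x :: xs).map (Prod.mk u) := by
      apply List.ext_getElem <;> simp
    have hs : (∑ i : Fin (xs.length + 1), (x :: xs).get i) = (x :: xs).sum := by
      rw [← List.sum_ofFn, List.ofFn_get]
    rw [hl, hs] at h
    rw [hxs, h]
    congr 2 <;> push_cast <;> ring
  -- length bookkeeping
  have hNlen : xs.length + 1 = ps.length := by rw [hxs]; rfl
  have hNq : ((xs.length + 1 : ℕ) : ℚ) = (∑ i, κ i) * d := by
    rw [hNlen, hlen]
    push_cast
    rw [Finset.sum_mul]
    exact Finset.sum_congr rfl fun i _ => haq i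
  have hS : (0 : ℚ) < ∑ i, κ i := Finset.sum_pos (fun i _ => hκ i) Finset.univ_nonempty
  -- assemble
  have hG : G m (List.ofFn fun i : Fin (n + 1) => (κ i, p i)) =
      some (mergeList m (κ 0, p 0) (List.ofFn fun i : Fin n => (κ i.succ, p i.succ))) := by
    rw [List.ofFn_succ, G_cons_eq m hassoc]
    rfl
  have key := hG.symm.trans ((hT.symm.trans (by rw [hmap])).trans hmain)
  apply Option.some_injective
  rw [key, Option.some.injEq, Prod.mk.injEq]
  refine ⟨?_, ?_⟩
  · -- credences
    show ((xs.length + 1 : ℕ) : ℚ) * u = ∑ i, κ i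
    rw [hNq, hu_def]
    field_simp
  · -- probabilities
    show ps.sum / ((xs.length + 1 : ℕ) : ℝ) = (∑ i, (κ i : ℝ) * p i) / ((∑ i, κ i : ℚ) : ℝ)
    have hNr : ((xs.length + 1 : ℕ) : ℝ) = ((∑ i, κ i : ℚ) : ℝ) * (d : ℝ) := by
      exact_mod_cast congrArg (fun q : ℚ => (q : ℝ)) hNq
    have har : ∀ i, (a i : ℝ) = (κ i : ℝ) * (d : ℝ) := by
      intro i; exact_mod_cast congrArg (fun q : ℚ => (q : ℝ)) (haq i)
    have hsum : ps.sum = (∑ i, (κ i : ℝ) * p i) * (d : ℝ) := by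
      rw [hpsum, Finset.sum_mul]
      refine Finset.sum_congr rfl fun i _ => ?_
      rw [har i]; ring
    have hdr : ((d : ℝ)) ≠ 0 := by exact_mod_cast hd.ne'
    rw [hsum, hNr, mul_comm ((∑ i, κ i : ℚ) : ℝ) (d : ℝ), ← mul_comm (d : ℝ) _]
    rw [mul_div_mul_left _ _ hdr]
end

section
/- Fix a ∈ (0,1). For b ∈ (0,1) and c ∈ ℝ with 0 ≤ c ≤ b, define ρ(a,b,c) = (c − ab)/√(a(1−a)b(1−b)). Then ρ(a,b,c) tends to 0 as b tends to 0 from above, uniformly in c: for every ε > 0 there exists δ > 0 such that for all b ∈ (0, δ) and all c with 0 ≤ c ≤ b, |ρ(a,b,c)| < ε. -/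
/-- With `a ∈ (0,1)` fixed, the correlation coefficient
`ρ(a,b,c) = (c − ab)/√(a(1−a)b(1−b))` tends to `0` as `b → 0⁺`, uniformly over
all `c` with `0 ≤ c ≤ b`. -/
theorem corr_tendsto_zero_as_prob_tendsto_zero
    (a : ℝ) (ha : a ∈ Set.Ioo (0 : ℝ) 1) :
    ∀ ε > (0 : ℝ), ∃ δ > (0 : ℝ), ∀ b : ℝ, 0 < b → b < δ → b < 1 →
      ∀ c : ℝ, 0 ≤ c → c ≤ b →
        |(c - a * b) / Real.sqrt (a * (1 - a) * b * (1 - b))| < ε := by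
  obtain ⟨ha0, ha1⟩ := ha
  intro ε hε
  have hK : 0 < a * (1 - a) := by nlinarith
  refine ⟨min (1/2) (ε^2 * (a*(1-a)) / 2), by positivity, ?_⟩
  intro b hb hbδ hb1 c hc0 hcb
  have hb2 : b < 1/2 := lt_of_lt_of_le hbδ (min_le_left _ _)
  have hbε : b < ε^2 * (a*(1-a)) / 2 := lt_of_lt_of_le hbδ (min_le_right _ _)
  have h1b : (0:ℝ) < 1 - b := by linarith
  have hD : 0 < a * (1 - a) * b * (1 - b) := by positivity
  have hsD : 0 < Real.sqrt (a * (1 - a) * b * (1 - b)) := Real.sqrt_pos.mpr hD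
  rw [abs_div, abs_of_nonneg (Real.sqrt_nonneg _), div_lt_iff₀ hsD]
  have hN : |c - a * b| ≤ b := by
    rw [abs_le]; constructor <;> nlinarith
  have hkey : b < ε * Real.sqrt (a * (1 - a) * b * (1 - b)) := by
    have h2 : (ε * Real.sqrt (a * (1 - a) * b * (1 - b)))^2
        = ε^2 * (a * (1 - a) * b * (1 - b)) := by
      rw [mul_pow, Real.sq_sqrt hD.le]
    have : b^2 < (ε * Real.sqrt (a * (1 - a) * b * (1 - b)))^2 := by
      rw [h2]
      nlinarith [mul_lt_mul_of_pos_right hbε hb,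
        mul_lt_mul_of_pos_left hb2 (mul_pos (mul_pos (pow_pos hε 2) hK) hb)]
    exact lt_of_pow_lt_pow_left₀ 2 (by positivity) this
  exact lt_of_le_of_lt hN hkey
end
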